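/- Fix integers 2 ≤ a ≤ b, t ≤ a-1, and 1 ≤ h_1 < ... < h_t ≤ b. The number of t-tuples of pairwise disjoint paths (steps (1,0) or (0,-1)) where the i-th path runs from (1, b+h_i) to (a, h_i) equals det(g_{ij}) where g_{ij} = C(a+b-h_j+h_i-1, a-1). -/

import Mathlib

/-- A step moves one unit down `(1,0)` or one unit left `(0,-1)`. -/
def Step (p q : ℤ × ℤ) : Prop := q = p + (1, 0) ∨ q = p + (0, -1)

/-- `l` is a path starting at `p` and ending at `q`, each consecutive
difference being `(1,0)` or `(0,-1)`. -/
def IsPathFromTo (l : List (ℤ × ℤ)) (p q : ℤ × ℤ) : Prop :=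
  l.Chain' Step ∧ l.head? = some p ∧ l.getLast? = some q
namespace LGVAux


lemma step_diag {p q : ℤ × ℤ} (h : Step p q) : q.1 - q.2 = p.1 - p.2 + 1 := by
  rcases h with h | h <;> subst h <;> simp [Prod.fst_add, Prod.snd_add] <;> ring

lemma step_fst_le {p q : ℤ × ℤ} (h : Step p q) : p.1 ≤ q.1 ∧ q.1 ≤ p.1 + 1 := by
  rcases h with h | h <;> subst h <;> simp [Prod.fst_add] <;> omega

lemma step_snd_le {p q : ℤ × ℤ} (h : Step p q) : q.2 ≤ p.2 := by
  rcases h with h | h <;> subst h <;> simp [Prod.snd_add]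

lemma chain_step {l : List (ℤ × ℤ)} (hl : l.Chain' Step) {i : ℕ} (h : i + 1 < l.length) :
    Step (l[i]'(by omega)) (l[i+1]'h) := by
  have := List.isChain_iff_getElem.mp hl i (by omega)
  simpa using this

lemma diag_get {l : List (ℤ × ℤ)} (hl : l.Chain' Step) :
    ∀ (i : ℕ) (hi : i < l.length), (l[i]'hi).1 - (l[i]'hi).2 =
      (l[0]'(by omega)).1 - (l[0]'(by omega)).2 + i := by
  intro i
  induction i with
  | zero => intro hi; simp
  | succ n ih =>
    intro hi
    have h1 := ih (by omega)
    have h2 := step_diag (chain_step hl hi)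
    push_cast
    omega

lemma fst_mono {l : List (ℤ × ℤ)} (hl : l.Chain' Step) {i j : ℕ} (hij : i ≤ j)
    (hj : j < l.length) : (l[i]'(by omega)).1 ≤ (l[j]'hj).1 := by
  induction j with
  | zero => interval_cases i; rfl
  | succ n ih =>
    rcases Nat.eq_or_lt_of_le hij with rfl | hlt
    · rfl
    · have h1 := ih (by omega) (by omega)
      have h2 := step_fst_le (chain_step hl hj)
      omega

lemma snd_anti {l : List (ℤ × ℤ)} (hl : l.Chain' Step) {i j : ℕ} (hij : i ≤ j)
    (hj : j < l.length) : (l[j]'hj).2 ≤ (l[i]'(by omega)).2 := by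
  induction j with
  | zero => interval_cases i; rfl
  | succ n ih =>
    rcases Nat.eq_or_lt_of_le hij with rfl | hlt
    · rfl
    · have h1 := ih (by omega) (by omega)
      have h2 := step_snd_le (chain_step hl hj)
      omega

lemma path_nodup {l : List (ℤ × ℤ)} (hl : l.Chain' Step) : l.Nodup := by
  rw [List.Nodup, List.pairwise_iff_getElem]
  intro i j hi hj hij heq
  have h1 := diag_get hl i (by omega)
  have h2 := diag_get hl j hj
  rw [heq] at h1
  omega


lemma path_ne_nil {l : List (ℤ × ℤ)} {p q} (h : IsPathFromTo l p q) : l ≠ [] := by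
  rcases h with ⟨-, h, -⟩
  intro hl; subst hl; simp at h

lemma path_get_zero {l : List (ℤ × ℤ)} {p q} (h : IsPathFromTo l p q)
    (h0 : 0 < l.length) : l[0] = p := by
  rcases h with ⟨-, h, -⟩
  rcases l with _ | ⟨a, t⟩
  · simp at h0
  · simpa using h

lemma path_get_last {l : List (ℤ × ℤ)} {p q} (h : IsPathFromTo l p q) :
    l[l.length - 1]'(by have := path_ne_nil h; cases l <;> simp_all) = q := by
  have hne := path_ne_nil h
  rcases h with ⟨-, -, h⟩
  rw [List.getLast?_eq_getLast hne] at h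
  rw [List.getLast_eq_getElem] at h
  exact Option.some_injective _ h

lemma path_length {l : List (ℤ × ℤ)} {p q} (h : IsPathFromTo l p q) :
    (l.length : ℤ) = (q.1 - p.1) + (p.2 - q.2) + 1 := by
  have hne := path_ne_nil h
  have hlen : 0 < l.length := List.length_pos_iff.mpr hne
  have hd := diag_get h.1 (l.length - 1) (by omega)
  rw [path_get_last h] at hd
  rw [path_get_zero h hlen] at hd
  push_cast at hd
  omega

lemma path_deltas {l : List (ℤ × ℤ)} {p q} (h : IsPathFromTo l p q) :
    p.1 ≤ q.1 ∧ q.2 ≤ p.2 := by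
  have hne := path_ne_nil h
  have hlen : 0 < l.length := List.length_pos_iff.mpr hne
  have h1 := fst_mono h.1 (Nat.zero_le (l.length - 1)) (by omega)
  have h2 := snd_anti h.1 (Nat.zero_le (l.length - 1)) (by omega)
  rw [path_get_last h, path_get_zero h hlen] at h1 h2
  exact ⟨h1, h2⟩

lemma path_cons {p p' q : ℤ × ℤ} {l' : List (ℤ × ℤ)} (hs : Step p p')
    (h : IsPathFromTo l' p' q) : IsPathFromTo (p :: l') p q := by
  obtain ⟨hc, hh, hl⟩ := h
  have hne := path_ne_nil ⟨hc, hh, hl⟩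
  refine ⟨?_, by simp, by cases l' with | nil => exact absurd rfl hne | cons b t => rw [List.getLast?_cons_cons]; exact hl⟩
  rcases l' with _ | ⟨b, t⟩
  · exact List.isChain_singleton _
  · refine List.isChain_cons_cons.mpr ⟨?_, hc⟩
    have hb : b = p' := by simpa using hh
    rwa [hb]

lemma path_decomp {l : List (ℤ × ℤ)} {p q} (h : IsPathFromTo l p q) (hne : p ≠ q) :
    ∃ l', l = p :: l' ∧
      (IsPathFromTo l' (p + (1, 0)) q ∨ IsPathFromTo l' (p + (0, -1)) q) := by
  have hln := path_ne_nil h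
  rcases l with _ | ⟨a, t⟩
  · exact absurd rfl hln
  have ha : a = p := by exact path_get_zero h (by simp)
  subst ha
  rcases t with _ | ⟨b, t'⟩
  · exfalso; apply hne
    have := path_get_last h
    have : q = a := by simpa using this.symm
    exact this.symm
  refine ⟨b :: t', rfl, ?_⟩
  have hc : List.IsChain Step (a :: b :: t') := h.1
  rw [List.isChain_cons_cons] at hc
  have hstep : Step a b := hc.1
  have hpath : IsPathFromTo (b :: t') b q := ⟨hc.2, rfl, by
    have := h.2.2
    rwa [List.getLast?_cons_cons] at this⟩
  rcases hstep with hb | hb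
  · left; rwa [← hb]
  · right; rwa [← hb]


/-- Number of lattice paths from `p` to `q`. -/
noncomputable def pCount (p q : ℤ × ℤ) : ℕ :=
  if 0 ≤ q.1 - p.1 ∧ 0 ≤ p.2 - q.2 then
    ((q.1 - p.1) + (p.2 - q.2)).toNat.choose (q.1 - p.1).toNat else 0

lemma set_empty_of_neg {p q : ℤ × ℤ} (h : ¬(0 ≤ q.1 - p.1 ∧ 0 ≤ p.2 - q.2)) :
    {l : List (ℤ × ℤ) | IsPathFromTo l p q} = ∅ := by
  ext l
  simp only [Set.mem_setOf_eq, Set.mem_empty_iff_false, iff_false]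
  intro hl
  exact h ⟨by have := (path_deltas hl).1; omega, by have := (path_deltas hl).2; omega⟩

lemma set_single {p : ℤ × ℤ} : {l : List (ℤ × ℤ) | IsPathFromTo l p p} = {[p]} := by
  ext l
  simp only [Set.mem_setOf_eq, Set.mem_singleton_iff]
  constructor
  · intro hl
    have hlen := path_length hl
    have : l.length = 1 := by omega
    obtain ⟨x, rfl⟩ := List.length_eq_one_iff.mp this
    have hx : x = p := by simpa using path_get_zero hl (by simp)
    rw [hx]
  · rintro rfl
    exact ⟨List.isChain_singleton _, by simp, by simp⟩

lemma decomp_set {p q : ℤ × ℤ} (hne : p ≠ q) :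
    {l : List (ℤ × ℤ) | IsPathFromTo l p q} =
      (p :: ·) '' {l | IsPathFromTo l (p + (1, 0)) q} ∪
      (p :: ·) '' {l | IsPathFromTo l (p + (0, -1)) q} := by
  ext l
  simp only [Set.mem_setOf_eq, Set.mem_union, Set.mem_image]
  constructor
  · intro hl
    obtain ⟨l', rfl, hl' | hl'⟩ := path_decomp hl hne
    · exact Or.inl ⟨l', hl', rfl⟩
    · exact Or.inr ⟨l', hl', rfl⟩
  · rintro (⟨l', hl', rfl⟩ | ⟨l', hl', rfl⟩)
    · exact path_cons (Or.inl rfl) hl'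
    · exact path_cons (Or.inr rfl) hl'

lemma choose_rec (cx cy : ℕ) :
    (cx + 1 + (cy + 1)).choose (cx + 1) =
      (cx + (cy + 1)).choose cx + (cx + 1 + cy).choose (cx + 1) := by
  have h := Nat.choose_succ_succ (cx + cy + 1) cx
  simp only [Nat.succ_eq_add_one] at h
  calc (cx + 1 + (cy + 1)).choose (cx + 1)
      = (cx + cy + 1 + 1).choose (cx + 1) := by rw [show cx + cy + 1 + 1 = cx + 1 + (cy + 1) from by ring]
    _ = (cx + cy + 1).choose cx + (cx + cy + 1).choose (cx + 1) := h
    _ = (cx + (cy + 1)).choose cx + (cx + 1 + cy).choose (cx + 1) := by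
        rw [show cx + cy + 1 = cx + (cy + 1) from by ring]
        rw [show cx + (cy + 1) = cx + 1 + cy from by ring]

lemma pCount_rec (p q : ℤ × ℤ) (hx : 0 ≤ q.1 - p.1) (hy : 0 ≤ p.2 - q.2) (hne : p ≠ q) :
    pCount p q = pCount (p + (1, 0)) q + pCount (p + (0, -1)) q := by
  have hne2 : ¬(q.1 = p.1 ∧ q.2 = p.2) := by
    rintro ⟨h1, h2⟩; exact hne (Prod.ext h1.symm h2.symm)
  simp only [pCount, Prod.fst_add, Prod.snd_add, add_zero]
  by_cases hx1 : 0 ≤ q.1 - (p.1 + 1)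
  · by_cases hy1 : 0 ≤ p.2 + -1 - q.2
    · rw [if_pos ⟨hx, hy⟩, if_pos ⟨hx1, by omega⟩, if_pos ⟨by omega, hy1⟩]
      obtain ⟨cx, hcx⟩ : ∃ c : ℕ, q.1 - p.1 = (c : ℤ) + 1 := ⟨(q.1 - p.1 - 1).toNat, by omega⟩
      obtain ⟨cy, hcy⟩ : ∃ c : ℕ, p.2 - q.2 = (c : ℤ) + 1 := ⟨(p.2 - q.2 - 1).toNat, by omega⟩
      have e1 : ((q.1 - p.1) + (p.2 - q.2)).toNat = cx + 1 + (cy + 1) := by omega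
      have e2 : (q.1 - p.1).toNat = cx + 1 := by omega
      have e3 : ((q.1 - (p.1 + 1)) + (p.2 - q.2)).toNat = cx + (cy + 1) := by omega
      have e4 : (q.1 - (p.1 + 1)).toNat = cx := by omega
      have e5 : ((q.1 - p.1) + (p.2 + -1 - q.2)).toNat = cx + 1 + cy := by omega
      rw [e1, e2, e3, e4, e5]
      exact choose_rec cx cy
    · -- p.2 = q.2, so dy = 0, dx ≥ 1
      rw [if_pos ⟨hx, hy⟩, if_pos ⟨hx1, by omega⟩, if_neg (by omega)]
      have e1 : ((q.1 - p.1) + (p.2 - q.2)).toNat = (q.1 - p.1).toNat := by omega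
      have e2 : ((q.1 - (p.1 + 1)) + (p.2 - q.2)).toNat = (q.1 - (p.1 + 1)).toNat := by omega
      rw [e1, e2, Nat.choose_self, Nat.choose_self]
  · -- q.1 = p.1, dx = 0, dy ≥ 1
    rw [if_pos ⟨hx, hy⟩, if_neg (by omega), if_pos ⟨by omega, by omega⟩]
    have e1 : (q.1 - p.1).toNat = 0 := by omega
    have e2 : (q.1 - (p.1 + 1)).toNat = 0 := by omega
    rw [e1]
    simp [Nat.choose_zero_right]

lemma count_paths_aux : ∀ (n : ℕ) (p q : ℤ × ℤ),
    ((q.1 - p.1) + (p.2 - q.2)).toNat ≤ n →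
    {l : List (ℤ × ℤ) | IsPathFromTo l p q}.Finite ∧
    {l : List (ℤ × ℤ) | IsPathFromTo l p q}.ncard = pCount p q := by
  intro n
  induction n with
  | zero =>
    intro p q hm
    by_cases hpos : 0 ≤ q.1 - p.1 ∧ 0 ≤ p.2 - q.2
    · have hpq : p = q := by
        obtain ⟨h1, h2⟩ := hpos
        have h3 : q.1 = p.1 ∧ q.2 = p.2 := by omega
        exact Prod.ext h3.1.symm h3.2.symm
      subst hpq
      rw [set_single]
      refine ⟨Set.finite_singleton _, ?_⟩
      rw [Set.ncard_singleton]
      simp only [pCount, if_pos hpos]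
      have e1 : ((p.1 - p.1) + (p.2 - p.2)).toNat = 0 := by omega
      have e2 : (p.1 - p.1).toNat = 0 := by omega
      rw [e1, e2]; rfl
    · rw [set_empty_of_neg hpos]
      exact ⟨Set.finite_empty, by rw [Set.ncard_empty]; simp only [pCount]; rw [if_neg hpos]⟩
  | succ n ih =>
    intro p q hm
    by_cases hpos : 0 ≤ q.1 - p.1 ∧ 0 ≤ p.2 - q.2
    · by_cases hpq : p = q
      · subst hpq
        rw [set_single]
        refine ⟨Set.finite_singleton _, ?_⟩
        rw [Set.ncard_singleton]
        simp only [pCount, if_pos hpos]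
        have e1 : ((p.1 - p.1) + (p.2 - p.2)).toNat = 0 := by omega
        have e2 : (p.1 - p.1).toNat = 0 := by omega
        rw [e1, e2]; rfl
      · have hne2 : ¬(q.1 = p.1 ∧ q.2 = p.2) := by
          rintro ⟨h1, h2⟩; exact hpq (Prod.ext h1.symm h2.symm)
        have hR := ih (p + (1, 0)) q (by simp only [Prod.fst_add, Prod.snd_add]; omega)
        have hD := ih (p + (0, -1)) q (by simp only [Prod.fst_add, Prod.snd_add]; omega)
        rw [decomp_set hpq]
        have hinj : Function.Injective (p :: · : List (ℤ × ℤ) → List (ℤ × ℤ)) := by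
          intro u v huv; simpa using huv
        have hdisj : Disjoint ((p :: ·) '' {l | IsPathFromTo l (p + (1, 0)) q})
            ((p :: ·) '' {l | IsPathFromTo l (p + (0, -1)) q}) := by
          rw [Set.disjoint_left]
          rintro x ⟨u, hu, rfl⟩ ⟨v, hv, hvu⟩
          have huv : u = v := by simpa using hvu.symm
          subst huv
          have h1 := path_get_zero hu (List.length_pos_iff.mpr (path_ne_nil hu))
          have h2 := path_get_zero hv (List.length_pos_iff.mpr (path_ne_nil hv))
          rw [h1] at h2
          have : ((1 : ℤ), (0 : ℤ)) = ((0 : ℤ), (-1 : ℤ)) := by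
            have := add_left_cancel h2
            exact this
          simp at this
        refine ⟨Set.Finite.union (hR.1.image _) (hD.1.image _), ?_⟩
        rw [Set.ncard_union_eq hdisj (hR.1.image _) (hD.1.image _),
          Set.ncard_image_of_injective _ hinj, Set.ncard_image_of_injective _ hinj,
          hR.2, hD.2]
        exact (pCount_rec p q hpos.1 hpos.2 hpq).symm
    · rw [set_empty_of_neg hpos]
      exact ⟨Set.finite_empty, by rw [Set.ncard_empty]; simp only [pCount]; rw [if_neg hpos]⟩

lemma count_paths (p q : ℤ × ℤ) :
    {l : List (ℤ × ℤ) | IsPathFromTo l p q}.Finite ∧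
    {l : List (ℤ × ℤ) | IsPathFromTo l p q}.ncard = pCount p q :=
  count_paths_aux _ p q le_rfl

instance pathFinite (p q : ℤ × ℤ) : Finite {l : List (ℤ × ℤ) // IsPathFromTo l p q} :=
  (count_paths p q).1.to_subtype

lemma card_paths (p q : ℤ × ℤ) :
    Nat.card {l : List (ℤ × ℤ) // IsPathFromTo l p q} = pCount p q := by
  rw [← (count_paths p q).2, ← Nat.card_coe_set_eq]
  rfl




lemma int_ivt (f : ℕ → ℤ) : ∀ (K : ℕ), 0 ≤ f 0 → f K ≤ 0 →
    (∀ k, k < K → f k - 1 ≤ f (k + 1)) → ∃ k, k ≤ K ∧ f k = 0 := by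
  intro K
  induction K with
  | zero => intro h0 hK _; exact ⟨0, le_rfl, le_antisymm hK h0⟩
  | succ K ih =>
    intro h0 hK hstep
    by_cases hfK : f K ≤ 0
    · obtain ⟨k, hk, hfk⟩ := ih h0 hfK (fun k hk => hstep k (by omega))
      exact ⟨k, by omega, hfk⟩
    · have := hstep K (by omega)
      exact ⟨K + 1, le_rfl, by omega⟩

lemma paths_cross {P Q : List (ℤ × ℤ)} {xa u1 u2 v1 v2 : ℤ}
    (hP : IsPathFromTo P (1, u1) (xa, v1)) (hQ : IsPathFromTo Q (1, u2) (xa, v2))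
    (hu : u1 < u2) (hv : v2 < v1) : ∃ z, z ∈ P ∧ z ∈ Q := by
  have hlP : (P.length : ℤ) = (xa - 1) + (u1 - v1) + 1 := by simpa using path_length hP
  have hlQ : (Q.length : ℤ) = (xa - 1) + (u2 - v2) + 1 := by simpa using path_length hQ
  have hPne : 0 < P.length := List.length_pos_iff.mpr (path_ne_nil hP)
  have hQne : 0 < Q.length := List.length_pos_iff.mpr (path_ne_nil hQ)
  set K : ℕ := P.length - 1 with hK
  set d : ℕ := (u2 - u1).toNat with hd
  have hdz : (d : ℤ) = u2 - u1 := by omega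
  have hKz : (K : ℤ) = (P.length : ℤ) - 1 := by omega
  have hidx : ∀ k : ℕ, k ≤ K → k + d < Q.length := by
    intro k hk
    have : (k : ℤ) ≤ (K : ℤ) := by exact_mod_cast hk
    omega
  set f : ℕ → ℤ := fun k => (Q.getD (k + d) (0, 0)).1 - (P.getD k (0, 0)).1 with hf
  have hfval : ∀ k (hk : k ≤ K), f k = (Q[k + d]'(hidx k hk)).1 - (P[k]'(by omega)).1 := by
    intro k hk
    simp only [hf]
    rw [List.getD_eq_getElem _ _ (hidx k hk), List.getD_eq_getElem _ _ (by omega : k < P.length)]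
  have h0 : 0 ≤ f 0 := by
    rw [hfval 0 (Nat.zero_le _)]
    have h1 : (Q[0]'hQne).1 ≤ (Q[0 + d]'(hidx 0 (Nat.zero_le _))).1 :=
      fst_mono hQ.1 (Nat.zero_le _) _
    rw [path_get_zero hQ hQne] at h1
    rw [path_get_zero hP hPne]
    simpa using h1
  have hKf : f K ≤ 0 := by
    rw [hfval K le_rfl]
    have h1 : (Q[K + d]'(hidx K le_rfl)).1 ≤ (Q[Q.length - 1]'(by omega)).1 := by
      apply fst_mono hQ.1 (by omega)
    rw [path_get_last hQ] at h1
    have h2 : (P[K]'(by omega)) = (xa, v1) := by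
      exact path_get_last hP
    rw [h2]
    simpa using h1
  have hstep : ∀ k, k < K → f k - 1 ≤ f (k + 1) := by
    intro k hk
    rw [hfval k (by omega), hfval (k + 1) (by omega)]
    have hq : (Q[k + d]'(hidx k (by omega))).1 ≤ (Q[k + 1 + d]'(hidx (k+1) (by omega))).1 := by
      apply fst_mono hQ.1 (by omega)
    have hp := step_fst_le (chain_step hP.1 (show k + 1 < P.length by omega))
    omega
  obtain ⟨k, hk, hfk⟩ := int_ivt f K h0 hKf hstep
  rw [hfval k hk] at hfk
  refine ⟨P[k]'(by omega), List.getElem_mem _, ?_⟩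
  have heq : P[k]'(by omega) = Q[k + d]'(hidx k hk) := by
    have d1 := diag_get hP.1 k (by omega)
    have d2 := diag_get hQ.1 (k + d) (hidx k hk)
    rw [path_get_zero hP hPne] at d1
    rw [path_get_zero hQ hQne] at d2
    have : (P[k]'(by omega)).2 = (Q[k + d]'(hidx k hk)).2 := by
      simp only at d1 d2
      push_cast at d1 d2
      omega
    exact Prod.ext (by omega) this
  rw [heq]
  exact List.getElem_mem _

lemma perm_eq_one {n : ℕ} (σ : Equiv.Perm (Fin n)) (h : StrictMono σ) : σ = 1 := by
  have hw : WellFoundedLT (Fin n) := inferInstance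
  have hinv : StrictMono (σ⁻¹ : Equiv.Perm (Fin n)) := by
    intro x y hxy
    rcases lt_trichotomy (σ⁻¹ x) (σ⁻¹ y) with hc | hc | hc
    · exact hc
    · exfalso; rw [← σ.apply_symm_apply x, ← σ.apply_symm_apply y] at hxy
      simp only [← Equiv.Perm.inv_def] at hxy
      rw [hc] at hxy; exact lt_irrefl _ hxy
    · exfalso
      have := h hc
      simp only [Equiv.Perm.inv_def, Equiv.apply_symm_apply] at this
      exact absurd hxy (not_lt.mpr this.le)
  ext i
  have h1 : i ≤ σ i := h.le_apply
  have h2 : σ i ≤ σ⁻¹ (σ i) := hinv.le_apply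
  simp only [Equiv.Perm.inv_def, Equiv.symm_apply_apply] at h2
  exact le_antisymm (by exact_mod_cast h2) (by exact_mod_cast h1)





lemma head?_eq_getElem {α : Type*} {l : List α} (h : 0 < l.length) :
    l.head? = some (l[0]'h) := by
  cases l with
  | nil => simp at h
  | cons a t => rfl

lemma getLast?_eq_getElem {α : Type*} {l : List α} (h : 0 < l.length) :
    l.getLast? = some (l[l.length - 1]'(by omega)) := by
  have hne : l ≠ [] := by cases l with | nil => simp at h | cons a t => simp
  rw [List.getLast?_eq_getLast hne, List.getLast_eq_getElem]

lemma splice_path {u v : List (ℤ × ℤ)} {p q p' q' x : ℤ × ℤ}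
    (hu : IsPathFromTo u p q) (hv : IsPathFromTo v p' q') {k m : ℕ}
    (hk : k < u.length) (hm : m < v.length) (hxu : u[k] = x) (hxv : v[m] = x) :
    IsPathFromTo (u.take (k + 1) ++ v.drop (m + 1)) p q' := by
  have htl : (u.take (k + 1)).length = k + 1 := by rw [List.length_take]; omega
  refine ⟨?_, ?_, ?_⟩
  · show List.IsChain Step _; rw [List.isChain_append]
    refine ⟨hu.1.take _, hv.1.drop _, ?_⟩
    intro x' hx' y hy
    rcases Nat.lt_or_ge (m + 1) v.length with hm1 | hm1
    · have hdl : 0 < (v.drop (m + 1)).length := by rw [List.length_drop]; omega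
      rw [getLast?_eq_getElem (by omega : 0 < (u.take (k+1)).length)] at hx'
      rw [head?_eq_getElem hdl] at hy
      have hx'' : x' = u[k] := by
        have : (u.take (k+1))[(u.take (k+1)).length - 1]'(by omega) = u[k]'hk := by
          simp only [List.getElem_take]
          congr 1; omega
        simp only [Option.mem_def, Option.some_inj] at hx'
        rw [← hx', this]
      have hy' : y = v[m + 1]'hm1 := by
        have : (v.drop (m+1))[0]'hdl = v[m+1]'hm1 := by
          simp only [List.getElem_drop]
        simp only [Option.mem_def, Option.some_inj] at hy
        rw [← hy, this]
      rw [hx'', hy']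
      have := chain_step hv.1 hm1
      rwa [hxv, ← hxu] at this
    · have : v.drop (m + 1) = [] := List.drop_eq_nil_of_le (by omega)
      rw [this] at hy
      simp at hy
  · have h0 : 0 < (u.take (k + 1) ++ v.drop (m + 1)).length := by
      rw [List.length_append]; omega
    rw [head?_eq_getElem h0]
    have : (u.take (k+1) ++ v.drop (m+1))[0]'h0 = u[0]'(by omega) := by
      rw [List.getElem_append_left (by omega : 0 < (u.take (k+1)).length)]
      simp only [List.getElem_take]
    rw [this, path_get_zero hu (by omega)]
  · rcases Nat.lt_or_ge (m + 1) v.length with hm1 | hm1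
    · have hdl : 0 < (v.drop (m + 1)).length := by rw [List.length_drop]; omega
      have h0 : 0 < (u.take (k + 1) ++ v.drop (m + 1)).length := by
        rw [List.length_append]; omega
      rw [getLast?_eq_getElem h0]
      have hlen : (u.take (k+1) ++ v.drop (m+1)).length = (k+1) + (v.length - (m+1)) := by
        rw [List.length_append, htl, List.length_drop]
      have : (u.take (k+1) ++ v.drop (m+1))[(u.take (k+1) ++ v.drop (m+1)).length - 1]'(by omega)
          = v[v.length - 1]'(by omega) := by
        rw [List.getElem_append_right (by omega : (u.take (k+1)).length ≤ (u.take (k+1) ++ v.drop (m+1)).length - 1)]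
        rw [List.getElem_drop]
        congr 1
        omega
      rw [this, path_get_last hv]
    · have hdrop : v.drop (m + 1) = [] := List.drop_eq_nil_of_le (by omega)
      rw [hdrop, List.append_nil]
      have h0 : 0 < (u.take (k+1)).length := by omega
      rw [getLast?_eq_getElem h0]
      have hmv : m = v.length - 1 := by omega
      subst hmv
      have : (u.take (k+1))[(u.take (k+1)).length - 1]'(by omega) = u[k]'hk := by
        simp only [List.getElem_take]; congr 1; omega
      rw [this, hxu, ← hxv, path_get_last hv]

variable {t : ℕ}

open Classical in
noncomputable def bset (l : Fin t → List (ℤ × ℤ)) : Finset (Fin t) :=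
  Finset.univ.filter (fun i => ∃ j, j ≠ i ∧ ∃ x, x ∈ l i ∧ x ∈ l j)

lemma bset_mem {l : Fin t → List (ℤ × ℤ)} {i : Fin t} :
    i ∈ bset l ↔ ∃ j, j ≠ i ∧ ∃ x, x ∈ l i ∧ x ∈ l j := by
  classical
  unfold bset
  rw [Finset.mem_filter]
  simp only [Finset.mem_univ, true_and]

noncomputable def iI (l : Fin t → List (ℤ × ℤ)) (hc : (bset l).Nonempty) : Fin t :=
  (bset l).min' hc

lemma iI_mem (l : Fin t → List (ℤ × ℤ)) (hc : (bset l).Nonempty) : iI l hc ∈ bset l :=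
  (bset l).min'_mem hc

lemma iI_min (l : Fin t → List (ℤ × ℤ)) (hc : (bset l).Nonempty) {i : Fin t}
    (hi : i ∈ bset l) : iI l hc ≤ i := (bset l).min'_le i hi

lemma exk (l : Fin t → List (ℤ × ℤ)) (hc : (bset l).Nonempty) :
    ∃ n, ∃ hn : n < (l (iI l hc)).length,
      ∃ j, j ≠ iI l hc ∧ (l (iI l hc))[n] ∈ l j := by
  obtain ⟨j, hj, x, hxi, hxj⟩ := bset_mem.mp (iI_mem l hc)
  obtain ⟨n, hn, rfl⟩ := List.getElem_of_mem hxi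
  exact ⟨n, hn, j, hj, hxj⟩

open Classical in
noncomputable def kI (l : Fin t → List (ℤ × ℤ)) (hc : (bset l).Nonempty) : ℕ :=
  Nat.find (exk l hc)

lemma kI_lt (l : Fin t → List (ℤ × ℤ)) (hc : (bset l).Nonempty) :
    kI l hc < (l (iI l hc)).length := by
  obtain ⟨hn, -⟩ := Nat.find_spec (exk l hc)
  exact hn

noncomputable def xI (l : Fin t → List (ℤ × ℤ)) (hc : (bset l).Nonempty) : ℤ × ℤ :=
  (l (iI l hc))[kI l hc]'(kI_lt l hc)

lemma xI_def (l : Fin t → List (ℤ × ℤ)) (hc : (bset l).Nonempty) :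
    (l (iI l hc))[kI l hc]'(kI_lt l hc) = xI l hc := rfl

lemma kI_spec (l : Fin t → List (ℤ × ℤ)) (hc : (bset l).Nonempty) :
    ∃ j, j ≠ iI l hc ∧ xI l hc ∈ l j := by
  obtain ⟨hn, j, hj, hmem⟩ := Nat.find_spec (exk l hc)
  exact ⟨j, hj, hmem⟩

lemma kI_min (l : Fin t → List (ℤ × ℤ)) (hc : (bset l).Nonempty) {n : ℕ}
    (hn : n < kI l hc) (hlen : n < (l (iI l hc)).length) {j : Fin t}
    (hj : j ≠ iI l hc) : (l (iI l hc))[n] ∉ l j := by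
  intro hmem
  exact Nat.find_min (exk l hc) hn ⟨hlen, j, hj, hmem⟩

open Classical in
noncomputable def jset (l : Fin t → List (ℤ × ℤ)) (hc : (bset l).Nonempty) : Finset (Fin t) :=
  Finset.univ.filter (fun j => j ≠ iI l hc ∧ xI l hc ∈ l j)

lemma jset_mem {l : Fin t → List (ℤ × ℤ)} {hc : (bset l).Nonempty} {j : Fin t} :
    j ∈ jset l hc ↔ j ≠ iI l hc ∧ xI l hc ∈ l j := by
  classical
  unfold jset
  rw [Finset.mem_filter]
  simp only [Finset.mem_univ, true_and]

lemma jset_ne (l : Fin t → List (ℤ × ℤ)) (hc : (bset l).Nonempty) : (jset l hc).Nonempty := by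
  obtain ⟨j, hj, hmem⟩ := kI_spec l hc
  exact ⟨j, jset_mem.mpr ⟨hj, hmem⟩⟩

noncomputable def jI (l : Fin t → List (ℤ × ℤ)) (hc : (bset l).Nonempty) : Fin t :=
  (jset l hc).min' (jset_ne l hc)

lemma jI_ne (l : Fin t → List (ℤ × ℤ)) (hc : (bset l).Nonempty) : jI l hc ≠ iI l hc :=
  (jset_mem.mp ((jset l hc).min'_mem (jset_ne l hc))).1

lemma xI_mem_j (l : Fin t → List (ℤ × ℤ)) (hc : (bset l).Nonempty) : xI l hc ∈ l (jI l hc) :=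
  (jset_mem.mp ((jset l hc).min'_mem (jset_ne l hc))).2

lemma xI_mem_i (l : Fin t → List (ℤ × ℤ)) (hc : (bset l).Nonempty) : xI l hc ∈ l (iI l hc) := by
  rw [← xI_def l hc]; exact List.getElem_mem _

lemma jI_min (l : Fin t → List (ℤ × ℤ)) (hc : (bset l).Nonempty) {j : Fin t}
    (hj : j ≠ iI l hc) (hmem : xI l hc ∈ l j) : jI l hc ≤ j :=
  (jset l hc).min'_le j (jset_mem.mpr ⟨hj, hmem⟩)

lemma iI_lt_jI (l : Fin t → List (ℤ × ℤ)) (hc : (bset l).Nonempty) : iI l hc < jI l hc := by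
  have h1 : iI l hc ≤ jI l hc := by
    apply iI_min l hc
    exact bset_mem.mpr ⟨iI l hc, Ne.symm (jI_ne l hc), xI l hc, xI_mem_j l hc, xI_mem_i l hc⟩
  exact lt_of_le_of_ne h1 (Ne.symm (jI_ne l hc))

lemma exm (l : Fin t → List (ℤ × ℤ)) (hc : (bset l).Nonempty) :
    ∃ n, ∃ hn : n < (l (jI l hc)).length, (l (jI l hc))[n] = xI l hc := by
  obtain ⟨n, hn, hx⟩ := List.getElem_of_mem (xI_mem_j l hc)
  exact ⟨n, hn, hx⟩

open Classical in
noncomputable def mI (l : Fin t → List (ℤ × ℤ)) (hc : (bset l).Nonempty) : ℕ :=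
  Nat.find (exm l hc)

lemma mI_lt (l : Fin t → List (ℤ × ℤ)) (hc : (bset l).Nonempty) :
    mI l hc < (l (jI l hc)).length := by
  obtain ⟨hn, -⟩ := Nat.find_spec (exm l hc)
  exact hn

lemma mI_get (l : Fin t → List (ℤ × ℤ)) (hc : (bset l).Nonempty) :
    (l (jI l hc))[mI l hc]'(mI_lt l hc) = xI l hc := by
  obtain ⟨hn, hx⟩ := Nat.find_spec (exm l hc)
  exact hx

lemma mI_min (l : Fin t → List (ℤ × ℤ)) (hc : (bset l).Nonempty) {n : ℕ}
    (hn : n < mI l hc) (hlen : n < (l (jI l hc)).length) :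
    (l (jI l hc))[n] ≠ xI l hc := by
  intro hx
  exact Nat.find_min (exm l hc) hn ⟨hlen, hx⟩

noncomputable def ΦF (l : Fin t → List (ℤ × ℤ)) (hc : (bset l).Nonempty) :
    Fin t → List (ℤ × ℤ) :=
  Function.update (Function.update l (iI l hc)
      ((l (iI l hc)).take (kI l hc + 1) ++ (l (jI l hc)).drop (mI l hc + 1)))
    (jI l hc) ((l (jI l hc)).take (mI l hc + 1) ++ (l (iI l hc)).drop (kI l hc + 1))

lemma ΦF_at_j (l : Fin t → List (ℤ × ℤ)) (hc : (bset l).Nonempty) :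
    ΦF l hc (jI l hc) =
      (l (jI l hc)).take (mI l hc + 1) ++ (l (iI l hc)).drop (kI l hc + 1) := by
  unfold ΦF; rw [Function.update_self]

lemma ΦF_at_i (l : Fin t → List (ℤ × ℤ)) (hc : (bset l).Nonempty) :
    ΦF l hc (iI l hc) =
      (l (iI l hc)).take (kI l hc + 1) ++ (l (jI l hc)).drop (mI l hc + 1) := by
  unfold ΦF
  rw [Function.update_of_ne (Ne.symm (jI_ne l hc)), Function.update_self]

lemma ΦF_at (l : Fin t → List (ℤ × ℤ)) (hc : (bset l).Nonempty) {i : Fin t}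
    (h1 : i ≠ iI l hc) (h2 : i ≠ jI l hc) : ΦF l hc i = l i := by
  unfold ΦF
  rw [Function.update_of_ne h2, Function.update_of_ne h1]

lemma ΦF_mem {l : Fin t → List (ℤ × ℤ)} {hc : (bset l).Nonempty} {i : Fin t} {y : ℤ × ℤ}
    (hy : y ∈ ΦF l hc i) : y ∈ l i ∨ y ∈ l (iI l hc) ∨ y ∈ l (jI l hc) := by
  by_cases h1 : i = iI l hc
  · subst h1
    rw [ΦF_at_i] at hy
    rcases List.mem_append.mp hy with hy | hy
    · exact Or.inl (List.mem_of_mem_take hy)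
    · exact Or.inr (Or.inr (List.mem_of_mem_drop hy))
  · by_cases h2 : i = jI l hc
    · subst h2
      rw [ΦF_at_j] at hy
      rcases List.mem_append.mp hy with hy | hy
      · exact Or.inl (List.mem_of_mem_take hy)
      · exact Or.inr (Or.inl (List.mem_of_mem_drop hy))
    · rw [ΦF_at l hc h1 h2] at hy
      exact Or.inl hy

lemma ΦF_i_len (l : Fin t → List (ℤ × ℤ)) (hc : (bset l).Nonempty) :
    kI l hc < (ΦF l hc (iI l hc)).length := by
  rw [ΦF_at_i, List.length_append, List.length_take]
  have := kI_lt l hc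
  omega

lemma ΦF_j_len (l : Fin t → List (ℤ × ℤ)) (hc : (bset l).Nonempty) :
    mI l hc < (ΦF l hc (jI l hc)).length := by
  rw [ΦF_at_j, List.length_append, List.length_take]
  have := mI_lt l hc
  omega

lemma ΦF_i_get (l : Fin t → List (ℤ × ℤ)) (hc : (bset l).Nonempty) {n : ℕ}
    (hn : n ≤ kI l hc) (h1 : n < (ΦF l hc (iI l hc)).length)
    (h2 : n < (l (iI l hc)).length) :
    (ΦF l hc (iI l hc))[n]'h1 = (l (iI l hc))[n]'h2 := by
  have h3 : n < ((l (iI l hc)).take (kI l hc + 1)).length := by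
    rw [List.length_take]
    have := kI_lt l hc
    omega
  simp only [ΦF_at_i]
  rw [List.getElem_append_left h3]
  simp only [List.getElem_take]

lemma ΦF_j_get (l : Fin t → List (ℤ × ℤ)) (hc : (bset l).Nonempty) {n : ℕ}
    (hn : n ≤ mI l hc) (h1 : n < (ΦF l hc (jI l hc)).length)
    (h2 : n < (l (jI l hc)).length) :
    (ΦF l hc (jI l hc))[n]'h1 = (l (jI l hc))[n]'h2 := by
  have h3 : n < ((l (jI l hc)).take (mI l hc + 1)).length := by
    rw [List.length_take]
    have := mI_lt l hc
    omega
  simp only [ΦF_at_j]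
  rw [List.getElem_append_left h3]
  simp only [List.getElem_take]

lemma xI_mem_ΦF_i (l : Fin t → List (ℤ × ℤ)) (hc : (bset l).Nonempty) :
    xI l hc ∈ ΦF l hc (iI l hc) := by
  have h1 := ΦF_i_len l hc
  have := ΦF_i_get l hc le_rfl h1 (kI_lt l hc)
  rw [xI_def] at this
  rw [← this]
  exact List.getElem_mem _

lemma xI_mem_ΦF_j (l : Fin t → List (ℤ × ℤ)) (hc : (bset l).Nonempty) :
    xI l hc ∈ ΦF l hc (jI l hc) := by
  have h1 := ΦF_j_len l hc
  have := ΦF_j_get l hc le_rfl h1 (mI_lt l hc)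
  rw [mI_get] at this
  rw [← this]
  exact List.getElem_mem _

lemma ΦF_cross (l : Fin t → List (ℤ × ℤ)) (hc : (bset l).Nonempty) :
    (bset (ΦF l hc)).Nonempty :=
  ⟨iI l hc, bset_mem.mpr ⟨jI l hc, jI_ne l hc, xI l hc, xI_mem_ΦF_i l hc, xI_mem_ΦF_j l hc⟩⟩

lemma iI_Φ (l : Fin t → List (ℤ × ℤ)) (hc : (bset l).Nonempty) :
    iI (ΦF l hc) (ΦF_cross l hc) = iI l hc := by
  apply le_antisymm
  · exact iI_min _ _ (bset_mem.mpr ⟨jI l hc, jI_ne l hc, xI l hc, xI_mem_ΦF_i l hc,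
      xI_mem_ΦF_j l hc⟩)
  · apply Finset.le_min'
    intro i hi
    obtain ⟨j, hj, y, hy1, hy2⟩ := bset_mem.mp hi
    by_contra hlt
    push_neg at hlt
    have hii : i ≠ iI l hc := fun h => by subst h; exact lt_irrefl _ hlt
    have hij2 : i ≠ jI l hc := fun h => by
      subst h; exact absurd (lt_trans (iI_lt_jI l hc) hlt) (lt_irrefl _)
    rw [ΦF_at l hc hii hij2] at hy1
    have : i ∈ bset l := by
      rcases ΦF_mem hy2 with hy | hy | hy
      · exact bset_mem.mpr ⟨j, hj, y, hy1, hy⟩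
      · exact bset_mem.mpr ⟨iI l hc, Ne.symm hii, y, hy1, hy⟩
      · exact bset_mem.mpr ⟨jI l hc, Ne.symm hij2, y, hy1, hy⟩
    exact absurd (iI_min l hc this) (not_le.mpr hlt)

lemma kI_Φ (l : Fin t → List (ℤ × ℤ)) (hc : (bset l).Nonempty)
    (hch : ∀ i, (l i).Chain' Step) :
    kI (ΦF l hc) (ΦF_cross l hc) = kI l hc := by
  classical
  show Nat.find (exk (ΦF l hc) (ΦF_cross l hc)) = kI l hc
  rw [Nat.find_eq_iff]
  simp only [iI_Φ l hc]
  constructor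
  · refine ⟨ΦF_i_len l hc, jI l hc, jI_ne l hc, ?_⟩
    rw [ΦF_i_get l hc le_rfl (ΦF_i_len l hc) (kI_lt l hc), xI_def]
    exact xI_mem_ΦF_j l hc
  · rintro n hn ⟨hlen, j, hj, hmem⟩
    have h2 : n < (l (iI l hc)).length := by have := kI_lt l hc; omega
    rw [ΦF_i_get l hc (le_of_lt hn) hlen h2] at hmem
    by_cases hjj : j = jI l hc
    · subst hjj
      rw [ΦF_at_j] at hmem
      rcases List.mem_append.mp hmem with hy | hy
      · exact kI_min l hc hn h2 hj (List.mem_of_mem_take hy)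
      · obtain ⟨r, hr, hyr⟩ := List.getElem_of_mem hy
        rw [List.getElem_drop] at hyr
        have hnd := path_nodup (hch (iI l hc))
        have := (List.Nodup.getElem_inj_iff hnd).mp hyr
        omega
    · rw [ΦF_at l hc hj hjj] at hmem
      exact kI_min l hc hn h2 hj hmem

lemma xI_Φ (l : Fin t → List (ℤ × ℤ)) (hc : (bset l).Nonempty)
    (hch : ∀ i, (l i).Chain' Step) :
    xI (ΦF l hc) (ΦF_cross l hc) = xI l hc := by
  rw [← xI_def (ΦF l hc) (ΦF_cross l hc)]
  simp only [iI_Φ l hc, kI_Φ l hc hch]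
  rw [ΦF_i_get l hc le_rfl _ (kI_lt l hc), xI_def]

lemma jI_Φ (l : Fin t → List (ℤ × ℤ)) (hc : (bset l).Nonempty)
    (hch : ∀ i, (l i).Chain' Step) :
    jI (ΦF l hc) (ΦF_cross l hc) = jI l hc := by
  apply le_antisymm
  · apply Finset.min'_le
    rw [jset_mem]
    simp only [iI_Φ l hc, xI_Φ l hc hch]
    exact ⟨jI_ne l hc, xI_mem_ΦF_j l hc⟩
  · apply Finset.le_min'
    intro j hjmem
    rw [jset_mem] at hjmem
    simp only [iI_Φ l hc, xI_Φ l hc hch] at hjmem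
    obtain ⟨hj, hmem⟩ := hjmem
    by_cases hjj : j = jI l hc
    · exact le_of_eq hjj.symm
    · rw [ΦF_at l hc hj hjj] at hmem
      exact jI_min l hc hj hmem

lemma mI_Φ (l : Fin t → List (ℤ × ℤ)) (hc : (bset l).Nonempty)
    (hch : ∀ i, (l i).Chain' Step) :
    mI (ΦF l hc) (ΦF_cross l hc) = mI l hc := by
  classical
  show Nat.find (exm (ΦF l hc) (ΦF_cross l hc)) = mI l hc
  rw [Nat.find_eq_iff]
  simp only [jI_Φ l hc hch, xI_Φ l hc hch]
  constructor
  · refine ⟨ΦF_j_len l hc, ?_⟩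
    rw [ΦF_j_get l hc le_rfl (ΦF_j_len l hc) (mI_lt l hc)]
    exact mI_get l hc
  · rintro n hn ⟨hlen, hx⟩
    have h2 : n < (l (jI l hc)).length := by have := mI_lt l hc; omega
    rw [ΦF_j_get l hc (le_of_lt hn) hlen h2] at hx
    exact mI_min l hc hn h2 hx

lemma ΦF_invol (l : Fin t → List (ℤ × ℤ)) (hc : (bset l).Nonempty)
    (hch : ∀ i, (l i).Chain' Step) :
    ΦF (ΦF l hc) (ΦF_cross l hc) = l := by
  funext i
  have htakei : ((l (iI l hc)).take (kI l hc + 1)).length = kI l hc + 1 := by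
    rw [List.length_take]; have := kI_lt l hc; omega
  have htakej : ((l (jI l hc)).take (mI l hc + 1)).length = mI l hc + 1 := by
    rw [List.length_take]; have := mI_lt l hc; omega
  by_cases h1 : i = iI l hc
  · subst h1
    have hstep := ΦF_at_i (ΦF l hc) (ΦF_cross l hc)
    simp only [iI_Φ l hc, jI_Φ l hc hch, kI_Φ l hc hch, mI_Φ l hc hch] at hstep
    rw [hstep, ΦF_at_i l hc, ΦF_at_j l hc,
      List.take_append_of_le_length (by omega), List.take_take,
      List.drop_left' htakej]
    have : min (kI l hc + 1) (kI l hc + 1) = kI l hc + 1 := min_self _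
    rw [this, List.take_append_drop]
  · by_cases h2 : i = jI l hc
    · subst h2
      have hstep := ΦF_at_j (ΦF l hc) (ΦF_cross l hc)
      simp only [iI_Φ l hc, jI_Φ l hc hch, kI_Φ l hc hch, mI_Φ l hc hch] at hstep
      rw [hstep, ΦF_at_i l hc, ΦF_at_j l hc,
        List.take_append_of_le_length (by omega), List.take_take,
        List.drop_left' htakei]
      have : min (mI l hc + 1) (mI l hc + 1) = mI l hc + 1 := min_self _
      rw [this, List.take_append_drop]
    · have hstep := ΦF_at (ΦF l hc) (ΦF_cross l hc)
        (i := i) (by rwa [iI_Φ l hc]) (by rwa [jI_Φ l hc hch])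
      rw [hstep, ΦF_at l hc h1 h2]

lemma ΦF_path {A Bf : Fin t → ℤ × ℤ} {σ : Equiv.Perm (Fin t)}
    {l : Fin t → List (ℤ × ℤ)} (hc : (bset l).Nonempty)
    (hσ : ∀ i, IsPathFromTo (l i) (A i) (Bf (σ i))) :
    ∀ i, IsPathFromTo (ΦF l hc i) (A i)
      (Bf ((σ * Equiv.swap (iI l hc) (jI l hc)) i)) := by
  intro i
  by_cases h1 : i = iI l hc
  · subst h1
    rw [ΦF_at_i l hc]
    have hs : (σ * Equiv.swap (iI l hc) (jI l hc)) (iI l hc) = σ (jI l hc) := by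
      simp [Equiv.Perm.mul_apply, Equiv.swap_apply_left]
    rw [hs]
    exact splice_path (hσ (iI l hc)) (hσ (jI l hc)) (kI_lt l hc) (mI_lt l hc)
      (xI_def l hc) (mI_get l hc)
  · by_cases h2 : i = jI l hc
    · subst h2
      rw [ΦF_at_j l hc]
      have hs : (σ * Equiv.swap (iI l hc) (jI l hc)) (jI l hc) = σ (iI l hc) := by
        simp [Equiv.Perm.mul_apply, Equiv.swap_apply_right]
      rw [hs]
      exact splice_path (hσ (jI l hc)) (hσ (iI l hc)) (mI_lt l hc) (kI_lt l hc)
        (mI_get l hc) (xI_def l hc)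
    · rw [ΦF_at l hc h1 h2]
      have hs : (σ * Equiv.swap (iI l hc) (jI l hc)) i = σ i := by
        simp [Equiv.Perm.mul_apply, Equiv.swap_apply_of_ne_of_ne h1 h2]
      rw [hs]
      exact hσ i



lemma nat_card_sigma {ι : Type*} [Fintype ι] (C : ι → Type*) [hC : ∀ i, Finite (C i)] :
    Nat.card ((i : ι) × C i) = ∑ i, Nat.card (C i) := by
  letI : ∀ i, Fintype (C i) := fun i => Fintype.ofFinite _
  rw [Nat.card_eq_fintype_card, Fintype.card_sigma]
  congr 1
  ext i
  rw [Nat.card_eq_fintype_card]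

lemma sigma_subtype_ext {α β : Type*} {p : α → Prop} {q : α → β → Prop}
    (x y : Σ s : {s // p s}, {l : β // q s.val l})
    (h1 : x.1.1 = y.1.1) (h2 : x.2.1 = y.2.1) : x = y := by
  obtain ⟨⟨s, hs⟩, ⟨l, hl⟩⟩ := x
  obtain ⟨⟨s', hs'⟩, ⟨l', hl'⟩⟩ := y
  dsimp at h1 h2
  subst h1
  subst h2
  rfl

def sigmaSubtypeFstEquiv {α : Type*} (P : α → Prop) (C : α → Type*) :
    {x : Σ i, C i // P x.1} ≃ Σ i : {i // P i}, C i.1 where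
  toFun x := ⟨⟨x.1.1, x.2⟩, x.1.2⟩
  invFun y := ⟨⟨y.1.1, y.2⟩, y.1.2⟩
  left_inv x := rfl
  right_inv y := rfl

lemma sigma_subtype_ext' {α β : Type*} {q : α → β → Prop}
    (x y : Σ s : α, {l : β // q s l})
    (h1 : x.1 = y.1) (h2 : x.2.1 = y.2.1) : x = y := by
  obtain ⟨s, ⟨l, hl⟩⟩ := x
  obtain ⟨s', ⟨l', hl'⟩⟩ := y
  dsimp at h1 h2
  subst h1
  subst h2
  rfl

variable {t : ℕ} (A Bf : Fin t → ℤ × ℤ)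

noncomputable def flipMap
    (x : Σ σ : Equiv.Perm (Fin t), {l : Fin t → List (ℤ × ℤ) //
      (∀ i, IsPathFromTo (l i) (A i) (Bf (σ i))) ∧ (bset l).Nonempty}) :
    Σ σ : Equiv.Perm (Fin t), {l : Fin t → List (ℤ × ℤ) //
      (∀ i, IsPathFromTo (l i) (A i) (Bf (σ i))) ∧ (bset l).Nonempty} :=
  ⟨x.1 * Equiv.swap (iI x.2.1 x.2.2.2) (jI x.2.1 x.2.2.2),
   ⟨ΦF x.2.1 x.2.2.2, ⟨ΦF_path x.2.2.2 x.2.2.1, ΦF_cross _ _⟩⟩⟩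

lemma flipMap_sign (x) :
    Equiv.Perm.sign (flipMap A Bf x).1 = - Equiv.Perm.sign x.1 := by
  obtain ⟨σ, ⟨l, hPl, hCrl⟩⟩ := x
  dsimp only [flipMap]
  rw [Equiv.Perm.sign_mul, Equiv.Perm.sign_swap (Ne.symm (jI_ne l hCrl)), mul_neg_one]

lemma flipMap_invol (x) : flipMap A Bf (flipMap A Bf x) = x := by
  obtain ⟨σ, ⟨l, hPl, hCrl⟩⟩ := x
  have hch : ∀ i, (l i).Chain' Step := fun i => (hPl i).1
  refine sigma_subtype_ext' _ _ ?_ ?_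
  · dsimp only [flipMap]
    rw [iI_Φ l hCrl, jI_Φ l hCrl hch, mul_assoc, Equiv.swap_mul_self, mul_one]
  · dsimp only [flipMap]
    exact ΦF_invol l hCrl hch

end LGVAux

open LGVAux in
theorem stmt_12 (a b t : ℕ) (ha : 2 ≤ a) (hab : a ≤ b) (hta : t ≤ a - 1)
    (h : Fin t → ℕ) (hmono : StrictMono h) (hh : ∀ i, 1 ≤ h i ∧ h i ≤ b) :
    (Nat.card {l : Fin t → List (ℤ × ℤ) //
        (∀ i, IsPathFromTo (l i) (1, (b : ℤ) + (h i : ℤ)) ((a : ℤ), (h i : ℤ))) ∧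
        (∀ i j, i ≠ j → ∀ x, x ∈ l i → x ∉ l j)} : ℤ) =
      Matrix.det (Matrix.of fun i j : Fin t =>
        (Nat.choose (a + b - h j + h i - 1) (a - 1) : ℤ)) := by
  classical
  set A : Fin t → ℤ × ℤ := fun i => ((1 : ℤ), (b : ℤ) + (h i : ℤ)) with hA
  set Bf : Fin t → ℤ × ℤ := fun i => ((a : ℤ), (h i : ℤ)) with hBf
  -- the path predicate for permutation σ
  set P : Equiv.Perm (Fin t) → (Fin t → List (ℤ × ℤ)) → Prop :=
    fun σ l => ∀ i, IsPathFromTo (l i) (A i) (Bf (σ i)) with hP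
  set Cr : (Fin t → List (ℤ × ℤ)) → Prop := fun l => (bset l).Nonempty with hCr
  -- entry computation
  have entry : ∀ i j : Fin t, pCount (A i) (Bf j) =
      Nat.choose (a + b - h j + h i - 1) (a - 1) := by
    intro i j
    have hj := (hh j).2
    have hi := (hh i).1
    simp only [pCount, hA, hBf]
    rw [if_pos (by constructor <;> push_cast <;> omega)]
    have e1 : (((a : ℤ) - 1) + (((b : ℤ) + (h i : ℤ)) - (h j : ℤ))).toNat
        = a + b - h j + h i - 1 := by push_cast; omega
    have e2 : ((a : ℤ) - 1).toNat = a - 1 := by omega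
    rw [e1, e2]
  -- finiteness
  haveI hfin : ∀ σ : Equiv.Perm (Fin t), Finite {l : Fin t → List (ℤ × ℤ) // P σ l} := by
    intro σ
    exact Finite.of_equiv _ (Equiv.subtypePiEquivPi
      (p := fun i u => IsPathFromTo u (A i) (Bf (σ i)))).symm
  haveI hfinC : ∀ σ : Equiv.Perm (Fin t), Finite {l : Fin t → List (ℤ × ℤ) // P σ l ∧ Cr l} := by
    intro σ
    apply Finite.of_injective
      (fun x => (⟨x.1, x.2.1⟩ : {l : Fin t → List (ℤ × ℤ) // P σ l}))
    intro x y hxy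
    apply Subtype.ext
    have hxy' : (⟨x.1, x.2.1⟩ : {l : Fin t → List (ℤ × ℤ) // P σ l}) = ⟨y.1, y.2.1⟩ := hxy
    have h2 := congrArg Subtype.val hxy'
    exact h2
  haveI hfinD : ∀ σ : Equiv.Perm (Fin t), Finite {l : Fin t → List (ℤ × ℤ) // P σ l ∧ ¬Cr l} := by
    intro σ
    apply Finite.of_injective
      (fun x => (⟨x.1, x.2.1⟩ : {l : Fin t → List (ℤ × ℤ) // P σ l}))
    intro x y hxy
    apply Subtype.ext
    have hxy' : (⟨x.1, x.2.1⟩ : {l : Fin t → List (ℤ × ℤ) // P σ l}) = ⟨y.1, y.2.1⟩ := hxy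
    have h2 := congrArg Subtype.val hxy'
    exact h2
  -- counting systems
  have hsys : ∀ σ : Equiv.Perm (Fin t),
      (Nat.card {l : Fin t → List (ℤ × ℤ) // P σ l} : ℤ) =
      ∏ i : Fin t, (pCount (A i) (Bf (σ i)) : ℤ) := by
    intro σ
    rw [Nat.card_congr (Equiv.subtypePiEquivPi
      (p := fun i u => IsPathFromTo u (A i) (Bf (σ i)))), Nat.card_pi]
    push_cast
    exact Finset.prod_congr rfl (fun i _ => by rw [card_paths])
  -- splitting into crossing and non-crossing
  have hsplit : ∀ σ : Equiv.Perm (Fin t),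
      Nat.card {l : Fin t → List (ℤ × ℤ) // P σ l} =
      Nat.card {l : Fin t → List (ℤ × ℤ) // P σ l ∧ ¬Cr l} +
      Nat.card {l : Fin t → List (ℤ × ℤ) // P σ l ∧ Cr l} := by
    intro σ
    rw [← Nat.card_congr (Equiv.sumCompl (fun x : {l : Fin t → List (ℤ × ℤ) // P σ l} =>
      Cr x.val))]
    rw [Nat.card_sum]
    rw [Nat.card_congr (Equiv.subtypeSubtypeEquivSubtypeInter (P σ) Cr),
      Nat.card_congr (Equiv.subtypeSubtypeEquivSubtypeInter (P σ) (fun l => ¬ Cr l))]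
    omega
  -- non-crossing forces identity
  have hid : ∀ σ : Equiv.Perm (Fin t), σ ≠ 1 →
      IsEmpty {l : Fin t → List (ℤ × ℤ) // P σ l ∧ ¬Cr l} := by
    intro σ hσ
    constructor
    rintro ⟨l, hPl, hCrl⟩
    apply hσ
    apply perm_eq_one
    intro i j hij
    rcases lt_trichotomy (σ i) (σ j) with hlt | heq | hgt
    · exact hlt
    · exact absurd (σ.injective heq) (ne_of_lt hij)
    · exfalso
      obtain ⟨z, hz1, hz2⟩ := paths_cross (hPl i) (hPl j)
        (by push_cast; have := hmono hij; omega)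
        (by push_cast; have := hmono hgt; omega)
      exact hCrl ⟨i, bset_mem.mpr ⟨j, (ne_of_lt hij).symm, z, hz1, hz2⟩⟩
  -- the identity part is the disjoint path systems
  have hmain : Nat.card {l : Fin t → List (ℤ × ℤ) // P 1 l ∧ ¬Cr l} =
      Nat.card {l : Fin t → List (ℤ × ℤ) //
        (∀ i, IsPathFromTo (l i) (1, (b : ℤ) + (h i : ℤ)) ((a : ℤ), (h i : ℤ))) ∧
        (∀ i j, i ≠ j → ∀ x, x ∈ l i → x ∉ l j)} := by
    apply Nat.card_congr
    apply Equiv.subtypeEquivRight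
    intro l
    constructor
    · rintro ⟨h1, h2⟩
      refine ⟨fun i => by simpa using h1 i, ?_⟩
      intro i j hij x hxi hxj
      exact h2 ⟨i, bset_mem.mpr ⟨j, hij.symm, x, hxi, hxj⟩⟩
    · rintro ⟨h1, h2⟩
      refine ⟨fun i => by simpa using h1 i, ?_⟩
      rintro ⟨i, hi⟩
      obtain ⟨j, hj, x, hx1, hx2⟩ := bset_mem.mp hi
      exact h2 i j (Ne.symm hj) x hx1 hx2
  -- cancellation of the crossing part
  have hcancel : ∑ σ : Equiv.Perm (Fin t), ((Equiv.Perm.sign σ : ℤ) *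
      (Nat.card {l : Fin t → List (ℤ × ℤ) // P σ l ∧ Cr l} : ℤ)) = 0 := by
    set X := Σ σ : Equiv.Perm (Fin t), {l : Fin t → List (ℤ × ℤ) //
      (∀ i, IsPathFromTo (l i) (A i) (Bf (σ i))) ∧ (bset l).Nonempty} with hX
    have hCeq : ∀ σ : Equiv.Perm (Fin t), {l : Fin t → List (ℤ × ℤ) // P σ l ∧ Cr l}
        = {l : Fin t → List (ℤ × ℤ) //
          (∀ i, IsPathFromTo (l i) (A i) (Bf (σ i))) ∧ (bset l).Nonempty} := by
      intro σ; rfl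
    -- sum over each sign class is a cardinality of a sigma type
    have hclass : ∀ ε : ℤˣ,
        ∑ σ ∈ Finset.univ.filter (fun σ : Equiv.Perm (Fin t) => Equiv.Perm.sign σ = ε),
          (Nat.card {l : Fin t → List (ℤ × ℤ) // P σ l ∧ Cr l}) =
        Nat.card {x : X // Equiv.Perm.sign x.1 = ε} := by
      intro ε
      rw [Nat.card_congr (sigmaSubtypeFstEquiv (fun σ : Equiv.Perm (Fin t) =>
        Equiv.Perm.sign σ = ε) _), nat_card_sigma]
      exact Finset.sum_subtype (Finset.univ.filter
        (fun σ : Equiv.Perm (Fin t) => Equiv.Perm.sign σ = ε))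
        (fun σ => by simp) (fun σ => Nat.card {l : Fin t → List (ℤ × ℤ) // P σ l ∧ Cr l})
    -- the two classes have equal cardinality via the involution
    have hbij : Nat.card {x : X // Equiv.Perm.sign x.1 = 1} =
        Nat.card {x : X // Equiv.Perm.sign x.1 = -1} := by
      apply Nat.card_congr
      refine ⟨fun x => ⟨flipMap A Bf x.1, by rw [flipMap_sign, x.2]⟩,
        fun x => ⟨flipMap A Bf x.1, by rw [flipMap_sign, x.2, neg_neg]⟩, ?_, ?_⟩
      · intro x; apply Subtype.ext; exact flipMap_invol A Bf x.1
      · intro x; apply Subtype.ext; exact flipMap_invol A Bf x.1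
    -- split the sum by sign
    have hsigns : ∀ σ : Equiv.Perm (Fin t),
        Equiv.Perm.sign σ = 1 ∨ Equiv.Perm.sign σ = -1 := fun σ =>
      Int.units_eq_one_or _
    rw [← Finset.sum_filter_add_sum_filter_not Finset.univ
      (fun σ : Equiv.Perm (Fin t) => Equiv.Perm.sign σ = 1)]
    have e1 : ∑ σ ∈ Finset.univ.filter
        (fun σ : Equiv.Perm (Fin t) => Equiv.Perm.sign σ = 1),
        ((Equiv.Perm.sign σ : ℤ) *
          (Nat.card {l : Fin t → List (ℤ × ℤ) // P σ l ∧ Cr l} : ℤ)) =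
        ∑ σ ∈ Finset.univ.filter
          (fun σ : Equiv.Perm (Fin t) => Equiv.Perm.sign σ = 1),
          ((Nat.card {l : Fin t → List (ℤ × ℤ) // P σ l ∧ Cr l} : ℤ)) := by
      apply Finset.sum_congr rfl
      intro σ hσ
      rw [Finset.mem_filter] at hσ
      rw [hσ.2]
      simp
    have e2 : ∑ σ ∈ Finset.univ.filter
        (fun σ : Equiv.Perm (Fin t) => ¬ Equiv.Perm.sign σ = 1),
        ((Equiv.Perm.sign σ : ℤ) *
          (Nat.card {l : Fin t → List (ℤ × ℤ) // P σ l ∧ Cr l} : ℤ)) =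
        - ∑ σ ∈ Finset.univ.filter
          (fun σ : Equiv.Perm (Fin t) => Equiv.Perm.sign σ = -1),
          ((Nat.card {l : Fin t → List (ℤ × ℤ) // P σ l ∧ Cr l} : ℤ)) := by
      rw [← Finset.sum_neg_distrib]
      apply Finset.sum_congr
      · apply Finset.filter_congr
        intro σ _
        constructor
        · intro hne; rcases hsigns σ with h1 | h1
          · exact absurd h1 hne
          · exact h1
        · intro h1 h2; rw [h1] at h2; exact absurd h2 (by decide)
      · intro σ hσ
        rw [Finset.mem_filter] at hσ
        rw [hσ.2]
        push_cast
        ring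
    rw [e1, e2]
    have c1 := congrArg (fun n : ℕ => (n : ℤ)) (hclass 1)
    have c2 := congrArg (fun n : ℕ => (n : ℤ)) (hclass (-1))
    push_cast at c1 c2
    rw [c1, c2, hbij]
    ring
  -- assemble
  have hdet : Matrix.det (Matrix.of fun i j : Fin t =>
      (Nat.choose (a + b - h j + h i - 1) (a - 1) : ℤ)) =
      ∑ σ : Equiv.Perm (Fin t), ((Equiv.Perm.sign σ : ℤ) *
        ∏ i : Fin t, (pCount (A i) (Bf (σ i)) : ℤ)) := by
    rw [← Matrix.det_transpose, Matrix.det_apply']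
    apply Finset.sum_congr rfl
    intro σ _
    congr 1
    apply Finset.prod_congr rfl
    intro i _
    rw [Matrix.transpose_apply, Matrix.of_apply, ← entry i (σ i)]
  rw [hdet]
  have hstep2 : ∀ σ : Equiv.Perm (Fin t),
      ((Equiv.Perm.sign σ : ℤ) * ∏ i : Fin t, (pCount (A i) (Bf (σ i)) : ℤ)) =
      (Equiv.Perm.sign σ : ℤ) *
        ((Nat.card {l : Fin t → List (ℤ × ℤ) // P σ l ∧ ¬Cr l} : ℤ) +
         (Nat.card {l : Fin t → List (ℤ × ℤ) // P σ l ∧ Cr l} : ℤ)) := by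
    intro σ
    rw [← hsys σ]
    congr 1
    rw [hsplit σ]
    push_cast
    ring
  rw [Finset.sum_congr rfl (fun σ _ => hstep2 σ)]
  have : ∑ σ : Equiv.Perm (Fin t), ((Equiv.Perm.sign σ : ℤ) *
      ((Nat.card {l : Fin t → List (ℤ × ℤ) // P σ l ∧ ¬Cr l} : ℤ) +
       (Nat.card {l : Fin t → List (ℤ × ℤ) // P σ l ∧ Cr l} : ℤ))) =
      ∑ σ : Equiv.Perm (Fin t), ((Equiv.Perm.sign σ : ℤ) *
        (Nat.card {l : Fin t → List (ℤ × ℤ) // P σ l ∧ ¬Cr l} : ℤ)) +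
      ∑ σ : Equiv.Perm (Fin t), ((Equiv.Perm.sign σ : ℤ) *
        (Nat.card {l : Fin t → List (ℤ × ℤ) // P σ l ∧ Cr l} : ℤ)) := by
    rw [← Finset.sum_add_distrib]
    apply Finset.sum_congr rfl
    intro σ _
    ring
  rw [this, hcancel, add_zero]
  have hsingle : ∑ σ : Equiv.Perm (Fin t), ((Equiv.Perm.sign σ : ℤ) *
      (Nat.card {l : Fin t → List (ℤ × ℤ) // P σ l ∧ ¬Cr l} : ℤ)) =
      (Nat.card {l : Fin t → List (ℤ × ℤ) // P 1 l ∧ ¬Cr l} : ℤ) := by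
    rw [Finset.sum_eq_single 1]
    · simp
    · intro σ _ hσ
      haveI := hid σ hσ
      rw [Nat.card_of_isEmpty]
      simp
    · intro hmem
      exact absurd (Finset.mem_univ 1) hmem
  rw [hsingle, hmain]
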